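/- The operations on parking quasi-ribbons defined by α ≺ β = α · β[max(α)-1], α ∘ β = α | β[|α|], α ≻ β = α · β[|α|] (where β[k] shifts all letters of β by k, · is concatenation, and | inserts a bar) satisfy the seven triduplicial relations: (x≺y)≺z = x≺(y≺z), (x∘y)∘z = x∘(y∘z), (x≻y)≻z = x≻(y≻z), (x≻y)≺z = x≻(y≺z), (x∘y)≺z = x∘(y≺z), (x≻y)∘z = x≻(y∘z), (x∘y)≻z = x∘(y≻z). -/

import Mathlib

noncomputable section

/-- A parking quasi-ribbon is represented as its list of blocks (the bars separate
consecutive blocks). -/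
abbrev PQ := List (List ℕ)

/-- The underlying word (concatenation of the blocks). -/
def wrd : PQ → List ℕ
  | [] => []
  | b :: bs => b ++ wrd bs

/-- The length `|α|` of a parking quasi-ribbon. -/
def lenw (x : PQ) : ℕ := (wrd x).length

/-- The maximal letter `max(α)`. -/
def maxw (x : PQ) : ℕ := (wrd x).foldr max 0

/-- `α[k]`: shift all letters by `k`. -/
def shiftPQ (k : ℕ) (x : PQ) : PQ := x.map (List.map (· + k))

/-- Barless concatenation `α · β` (the last block of `α` is merged with the first block
of `β`). -/
def catPQ : PQ → PQ → PQ
  | [], y => y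
  | [b], [] => [b]
  | [b], c :: cs => (b ++ c) :: cs
  | b :: bs, y => b :: catPQ bs y

/-- `α ≺ β = α · β[max(α) - 1]`. -/
def precPQ (x y : PQ) : PQ := catPQ x (shiftPQ (maxw x - 1) y)

/-- `α ∘ β = α | β[|α|]` (bar inserted). -/
def circPQ (x y : PQ) : PQ := x ++ shiftPQ (lenw x) y

/-- `α ≻ β = α · β[|α|]`. -/
def succPQ (x y : PQ) : PQ := catPQ x (shiftPQ (lenw x) y)

/-- Validity: a nonempty parking quasi-ribbon (nonempty blocks, nondecreasing underlying
word which is a parking function, bars only between strictly different values). -/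
def IsPQR (x : PQ) : Prop :=
  x ≠ [] ∧ (∀ b ∈ x, b ≠ []) ∧ List.Pairwise (· ≤ ·) (wrd x) ∧
    (∀ i, i < lenw x → 1 ≤ (wrd x).getD i 0 ∧ (wrd x).getD i 0 ≤ i + 1) ∧
    List.Chain' (fun b c => b.getLastD 0 < c.headD 0) x

-- aux
theorem wrd_cat : ∀ x y : PQ, wrd (catPQ x y) = wrd x ++ wrd y
  | [], y => by simp [catPQ, wrd]
  | [b], [] => by simp [catPQ, wrd]
  | [b], c :: cs => by simp [catPQ, wrd]
  | b :: b' :: bs, y => by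
      simp [catPQ, wrd, wrd_cat (b' :: bs) y]

theorem wrd_append : ∀ x y : PQ, wrd (x ++ y) = wrd x ++ wrd y
  | [], y => by simp [wrd]
  | b :: bs, y => by simp [wrd, wrd_append bs y]

theorem wrd_shift (k : ℕ) : ∀ x : PQ, wrd (shiftPQ k x) = (wrd x).map (· + k)
  | [] => by simp [shiftPQ, wrd]
  | b :: bs => by
      simp only [shiftPQ, List.map_cons, wrd, List.map_append]
      rw [← shiftPQ, wrd_shift k bs]

theorem cat_ne_nil : ∀ x y : PQ, x ≠ [] → catPQ x y ≠ []
  | [b], [], _ => by simp [catPQ]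
  | [b], c :: cs, _ => by simp [catPQ]
  | b :: b' :: bs, y, _ => by simp [catPQ]

theorem cat_cons (b : List ℕ) (t : PQ) (ht : t ≠ []) (y : PQ) :
    catPQ (b :: t) y = b :: catPQ t y := by
  cases t with
  | nil => exact absurd rfl ht
  | cons c cs => simp [catPQ]

theorem cat_assoc : ∀ x y z : PQ, catPQ (catPQ x y) z = catPQ x (catPQ y z)
  | [], y, z => by simp [catPQ]
  | [b], [], z => by cases z <;> simp [catPQ]
  | [b], [c], z => by cases z <;> simp [catPQ]
  | [b], c :: c' :: cs, z => by simp [catPQ, cat_cons]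
  | b :: b' :: bs, y, z => by
      rw [show catPQ (b :: b' :: bs) y = b :: catPQ (b' :: bs) y from by simp [catPQ],
        cat_cons b _ (cat_ne_nil _ _ (by simp)) z, cat_assoc (b' :: bs) y z,
        cat_cons b _ (by simp) (catPQ y z)]

theorem shift_cat (k : ℕ) : ∀ x y : PQ, shiftPQ k (catPQ x y) = catPQ (shiftPQ k x) (shiftPQ k y)
  | [], y => by simp [catPQ, shiftPQ]
  | [b], [] => by simp [catPQ, shiftPQ]
  | [b], c :: cs => by simp [catPQ, shiftPQ]
  | b :: b' :: bs, y => by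
      have h1 : ∀ w, shiftPQ k (b :: w) = List.map (· + k) b :: shiftPQ k w := by
        intro w; simp [shiftPQ]
      rw [cat_cons b _ (by simp), h1, h1, shift_cat k (b' :: bs) y,
        cat_cons _ (shiftPQ k (b' :: bs)) (by simp [shiftPQ])]

theorem shift_shift (k l : ℕ) (x : PQ) : shiftPQ k (shiftPQ l x) = shiftPQ (l + k) x := by
  simp [shiftPQ, List.map_map, Function.comp_def, Nat.add_assoc]

theorem cat_append_left : ∀ (x y w : PQ), y ≠ [] → catPQ (x ++ y) w = x ++ catPQ y w
  | [], y, w, _ => by simp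
  | b :: bs, y, w, hy => by
      rw [List.cons_append, cat_cons b _ (by simp [hy]), cat_append_left bs y w hy,
        List.cons_append]

theorem cat_append_right : ∀ (x u v : PQ), u ≠ [] → catPQ x (u ++ v) = catPQ x u ++ v
  | [], u, v, _ => by simp [catPQ]
  | [b], c :: cs, v, _ => by simp [catPQ]
  | b :: b' :: bs, u, v, hu => by
      rw [cat_cons b _ (by simp), cat_cons b _ (by simp),
        cat_append_right (b' :: bs) u v hu, List.cons_append]

theorem lenw_cat (x y : PQ) : lenw (catPQ x y) = lenw x + lenw y := by
  simp [lenw, wrd_cat]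

theorem lenw_append (x y : PQ) : lenw (x ++ y) = lenw x + lenw y := by
  simp [lenw, wrd_append]

theorem lenw_shift (k : ℕ) (x : PQ) : lenw (shiftPQ k x) = lenw x := by
  simp [lenw, wrd_shift]

theorem fold_max_append (a b : List ℕ) :
    (a ++ b).foldr max 0 = max (a.foldr max 0) (b.foldr max 0) := by
  induction a with
  | nil => simp
  | cons h t ih => simp [ih, max_assoc]

theorem maxw_cat (x y : PQ) : maxw (catPQ x y) = max (maxw x) (maxw y) := by
  simp only [maxw, wrd_cat]; exact fold_max_append _ _

theorem maxw_append (x y : PQ) : maxw (x ++ y) = max (maxw x) (maxw y) := by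
  simp only [maxw, wrd_append]; exact fold_max_append _ _

theorem fold_max_shift (k : ℕ) : ∀ w : List ℕ, w ≠ [] →
    (w.map (· + k)).foldr max 0 = w.foldr max 0 + k
  | [a], _ => by simp
  | a :: b :: t, _ => by
      have := fold_max_shift k (b :: t) (by simp)
      simp only [List.map_cons, List.foldr_cons] at *
      omega

theorem maxw_shift (k : ℕ) (x : PQ) (h : wrd x ≠ []) :
    maxw (shiftPQ k x) = maxw x + k := by
  simp [maxw, wrd_shift, fold_max_shift k _ h]

theorem shift_append (k : ℕ) (x y : PQ) :
    shiftPQ k (x ++ y) = shiftPQ k x ++ shiftPQ k y := by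
  simp [shiftPQ]

theorem wrd_ne_nil {x : PQ} (h : IsPQR x) : wrd x ≠ [] := by
  obtain ⟨hne, hb, -⟩ := h
  cases x with
  | nil => exact absurd rfl hne
  | cons b bs =>
      have hbne := hb b (by simp)
      simp only [wrd]
      intro h'
      exact hbne (List.append_eq_nil_iff.mp h').1

theorem mem_le_fold : ∀ {w : List ℕ} {a : ℕ}, a ∈ w → a ≤ w.foldr max 0
  | b :: t, a, h => by
      rcases List.mem_cons.mp h with h | h
      · subst h; simp
      · exact le_trans (mem_le_fold h) (by simp)

theorem fold_le {w : List ℕ} {n : ℕ} (h : ∀ a ∈ w, a ≤ n) : w.foldr max 0 ≤ n := by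
  induction w with
  | nil => simp
  | cons b t ih =>
      simp only [List.foldr_cons, max_le_iff]
      exact ⟨h b (by simp), ih fun a ha => h a (by simp [ha])⟩

theorem maxw_pos {x : PQ} (h : IsPQR x) : 1 ≤ maxw x := by
  have hw := wrd_ne_nil h
  have hlen : 0 < lenw x := by
    simpa [lenw, List.length_pos_iff] using hw
  have h1 := (h.2.2.2.1 0 hlen).1
  have hmem : (wrd x).getD 0 0 ∈ wrd x := by
    rw [List.getD_eq_getElem _ _ hlen]
    exact List.getElem_mem _
  exact le_trans h1 (mem_le_fold hmem)

theorem maxw_le_lenw {x : PQ} (h : IsPQR x) : maxw x ≤ lenw x := by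
  apply fold_le
  intro a ha
  obtain ⟨i, hi, rfl⟩ := List.mem_iff_getElem.mp ha
  have := (h.2.2.2.1 i hi).2
  rw [List.getD_eq_getElem _ _ hi] at this
  simp only [lenw]
  omega

theorem shift_ne_nil {x : PQ} (k : ℕ) (h : IsPQR x) : shiftPQ k x ≠ [] := by
  simp [shiftPQ, h.1]

/-- **The seven triduplicial relations** hold for the operations `≺`, `∘`, `≻` on
(nonempty) parking quasi-ribbons. -/
theorem triduplicial_relations (x y z : PQ)
    (hx : IsPQR x) (hy : IsPQR y) (hz : IsPQR z) :
    precPQ (precPQ x y) z = precPQ x (precPQ y z) ∧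
    circPQ (circPQ x y) z = circPQ x (circPQ y z) ∧
    succPQ (succPQ x y) z = succPQ x (succPQ y z) ∧
    precPQ (succPQ x y) z = succPQ x (precPQ y z) ∧
    precPQ (circPQ x y) z = circPQ x (precPQ y z) ∧
    circPQ (succPQ x y) z = succPQ x (circPQ y z) ∧
    succPQ (circPQ x y) z = circPQ x (succPQ y z) := by
  have hmx := maxw_pos hx
  have hmy := maxw_pos hy
  have hlx := maxw_le_lenw hx
  have hwy := wrd_ne_nil hy
  refine ⟨?_, ?_, ?_, ?_, ?_, ?_, ?_⟩
  · simp only [precPQ]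
    rw [maxw_cat, maxw_shift _ _ hwy,
      show max (maxw x) (maxw y + (maxw x - 1)) - 1 = (maxw y - 1) + (maxw x - 1) from by
        rw [Nat.max_eq_right (by omega)]; omega,
      shift_cat, shift_shift, cat_assoc]
  · simp only [circPQ]
    rw [lenw_append, lenw_shift, shift_append, shift_shift, List.append_assoc,
      Nat.add_comm (lenw y) (lenw x)]
  · simp only [succPQ]
    rw [lenw_cat, lenw_shift, shift_cat, shift_shift, cat_assoc,
      Nat.add_comm (lenw y) (lenw x)]
  · simp only [precPQ, succPQ]
    rw [maxw_cat, maxw_shift _ _ hwy,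
      show max (maxw x) (maxw y + lenw x) - 1 = (maxw y - 1) + lenw x from by
        rw [Nat.max_eq_right (by omega)]; omega,
      shift_cat, shift_shift, cat_assoc]
  · simp only [precPQ, circPQ]
    rw [maxw_append, maxw_shift _ _ hwy,
      show max (maxw x) (maxw y + lenw x) - 1 = (maxw y - 1) + lenw x from by
        rw [Nat.max_eq_right (by omega)]; omega,
      shift_cat, shift_shift, cat_append_left _ _ _ (shift_ne_nil _ hy)]
  · simp only [circPQ, succPQ]
    rw [lenw_cat, lenw_shift, shift_append, shift_shift,
      cat_append_right _ _ _ (shift_ne_nil _ hy), Nat.add_comm (lenw y) (lenw x)]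
  · simp only [circPQ, succPQ]
    rw [lenw_append, lenw_shift, shift_cat, shift_shift,
      cat_append_left _ _ _ (shift_ne_nil _ hy), Nat.add_comm (lenw y) (lenw x)]
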